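/- Upper regularization bound for absolutely continuous measures: if ρ : ℝ → [0,∞) is a bounded probability density, then for any x ∈ ℝ and 0 < y ≤ 1, ∫ log|x - iy - u| ρ(u) du ≤ ∫ log|x - u| ρ(u) du + y·π·‖ρ‖_∞/3 + y·‖ρ‖_∞·∫_ℝ ∫_0^1 t/(u²+t²) dt du, and in particular ∫ log|x - iy - u| ρ(u) du - ∫ log|x - u| ρ(u) du ≤ C·y·‖ρ‖_∞ for an absolute constant C (one may take C = π²/2). -/

import Mathlib

open MeasureTheory intervalIntegral

section helpers

open Set

noncomputable def Wreg (v : ℝ) : ℝ := Real.log ((v ^ 2 + 1) / v ^ 2) / 2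

lemma Wreg_eq (v : ℝ) : Wreg v = Real.log (v ^ 2 + 1) / 2 - Real.log v := by
  rcases eq_or_ne v 0 with h | h
  · simp [Wreg, h]
  · rw [Wreg, Real.log_div (by positivity) (pow_ne_zero 2 h), Real.log_pow]
    ring

lemma Wreg_nonneg (v : ℝ) : 0 ≤ Wreg v := by
  rcases eq_or_ne v 0 with h | h
  · simp [Wreg, h]
  · have h2 : (0:ℝ) < v ^ 2 := by positivity
    have : (1:ℝ) ≤ (v ^ 2 + 1) / v ^ 2 := (one_le_div h2).2 (by linarith)
    have := Real.log_nonneg this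
    unfold Wreg; linarith

lemma Wreg_abs (v : ℝ) : Wreg |v| = Wreg v := by simp [Wreg, sq_abs]

lemma Wreg_comp_div {y : ℝ} (hy : y ≠ 0) (v : ℝ) :
    Wreg (v / y) = Real.log ((v ^ 2 + y ^ 2) / v ^ 2) / 2 := by
  rcases eq_or_ne v 0 with h | h
  · simp [Wreg, h, zero_pow]
  · unfold Wreg
    congr 2
    field_simp

lemma Wreg_measurable : Measurable Wreg :=
  (Real.measurable_log.comp
    (((measurable_id.pow_const 2).add_const 1).div (measurable_id.pow_const 2))).div_const 2

lemma Wreg_le_tail {v : ℝ} (hv : 1 ≤ v) : Wreg v ≤ v ^ (-2 : ℝ) / 2 := by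
  have hv0 : (0:ℝ) < v := lt_of_lt_of_le one_pos hv
  have h2 : (0:ℝ) < v ^ 2 := by positivity
  have hlog : Real.log ((v ^ 2 + 1) / v ^ 2) ≤ (v ^ 2 + 1) / v ^ 2 - 1 :=
    Real.log_le_sub_one_of_pos (by positivity)
  have heq : (v ^ 2 + 1) / v ^ 2 - 1 = (v ^ 2)⁻¹ := by field_simp; ring
  have hr : v ^ (-2 : ℝ) = (v ^ 2)⁻¹ := by
    rw [show (-2 : ℝ) = -((2:ℕ):ℝ) by norm_num, Real.rpow_neg hv0.le, Real.rpow_natCast]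
  rw [Wreg, hr]
  rw [heq] at hlog
  linarith

lemma integrableOn_rpow_tail : IntegrableOn (fun v : ℝ => v ^ (-2 : ℝ)) (Ioi 1) :=
  integrableOn_Ioi_rpow_of_lt (by norm_num) one_pos

lemma integrableOn_Wreg_tail : IntegrableOn Wreg (Ioi 1) := by
  refine integrableOn_rpow_tail.mono' Wreg_measurable.aestronglyMeasurable ?_
  filter_upwards [ae_restrict_mem measurableSet_Ioi] with v hv
  have hv1 : (1:ℝ) ≤ v := le_of_lt hv
  have h1 := Wreg_le_tail hv1
  have h0 := Wreg_nonneg v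
  have hp : (0:ℝ) ≤ v ^ (-2 : ℝ) := Real.rpow_nonneg (by linarith) _
  rw [Real.norm_eq_abs, abs_of_nonneg h0]
  linarith

lemma integral_Wreg_tail_le : ∫ v in Ioi (1:ℝ), Wreg v ≤ 1 / 2 := by
  have hval : ∫ v in Ioi (1:ℝ), v ^ (-2 : ℝ) = 1 := by
    rw [integral_Ioi_rpow_of_lt (by norm_num) one_pos]
    norm_num
  have hmono : ∫ v in Ioi (1:ℝ), Wreg v ≤ ∫ v in Ioi (1:ℝ), v ^ (-2 : ℝ) / 2 := by
    refine setIntegral_mono_on integrableOn_Wreg_tail (integrableOn_rpow_tail.div_const 2)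
      measurableSet_Ioi ?_
    exact fun v hv => Wreg_le_tail (le_of_lt hv)
  have : ∫ v in Ioi (1:ℝ), v ^ (-2 : ℝ) / 2 = 1 / 2 := by
    rw [MeasureTheory.integral_div, hval]
  linarith

noncomputable def Greg (v : ℝ) : ℝ := 4 * v ^ (-(1/4) : ℝ) + (Real.log 2 / 2 - 4)

lemma integrableOn_rpow_mid : IntegrableOn (fun v : ℝ => v ^ (-(1/4) : ℝ)) (Ioc 0 1) := by
  have h : IntervalIntegrable (fun v : ℝ => v ^ (-(1/4) : ℝ)) volume 0 1 :=
    intervalIntegrable_rpow' (by norm_num)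
  rwa [intervalIntegrable_iff_integrableOn_Ioc_of_le zero_le_one] at h

lemma integrableOn_Greg : IntegrableOn Greg (Ioc 0 1) := by
  unfold Greg
  exact (integrableOn_rpow_mid.const_mul 4).add
    (integrableOn_const (by simp [Real.volume_Ioc]))

lemma Wreg_le_Greg {v : ℝ} (hv : v ∈ Ioc (0:ℝ) 1) : Wreg v ≤ Greg v := by
  obtain ⟨hv0, hv1⟩ := hv
  have hsq : v ^ 2 + 1 ≤ 2 := by nlinarith
  have h1 : Real.log (v ^ 2 + 1) ≤ Real.log 2 := Real.log_le_log (by positivity) hsq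
  have h2 : Real.log (v ^ (-(1/4) : ℝ)) ≤ v ^ (-(1/4) : ℝ) - 1 :=
    Real.log_le_sub_one_of_pos (Real.rpow_pos_of_pos hv0 _)
  rw [Real.log_rpow hv0] at h2
  rw [Wreg_eq, Greg]
  linarith

lemma Greg_nonneg {v : ℝ} (hv : v ∈ Ioc (0:ℝ) 1) : 0 ≤ Greg v := by
  obtain ⟨hv0, hv1⟩ := hv
  have h1 : (1:ℝ) ≤ v ^ (-(1/4) : ℝ) :=
    Real.one_le_rpow_of_pos_of_le_one_of_nonpos hv0 hv1 (by norm_num)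
  have h2 : (0:ℝ) ≤ Real.log 2 := Real.log_nonneg one_le_two
  unfold Greg
  linarith

lemma integrableOn_Wreg_mid : IntegrableOn Wreg (Ioc 0 1) := by
  refine integrableOn_Greg.mono' Wreg_measurable.aestronglyMeasurable ?_
  filter_upwards [ae_restrict_mem measurableSet_Ioc] with v hv
  rw [Real.norm_eq_abs, abs_of_nonneg (Wreg_nonneg v)]
  exact Wreg_le_Greg hv

lemma integral_Wreg_mid_le : ∫ v in Ioc (0:ℝ) 1, Wreg v ≤ Real.log 2 / 2 + 4 / 3 := by
  have hmono : ∫ v in Ioc (0:ℝ) 1, Wreg v ≤ ∫ v in Ioc (0:ℝ) 1, Greg v :=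
    setIntegral_mono_on integrableOn_Wreg_mid integrableOn_Greg measurableSet_Ioc
      fun v hv => Wreg_le_Greg hv
  have hval : ∫ v in Ioc (0:ℝ) 1, Greg v = Real.log 2 / 2 + 4 / 3 := by
    rw [← intervalIntegral.integral_of_le zero_le_one]
    have hrpow : ∫ v in (0:ℝ)..1, v ^ (-(1/4) : ℝ) = 4 / 3 := by
      rw [integral_rpow (Or.inl (by norm_num))]
      rw [Real.one_rpow, Real.zero_rpow (by norm_num)]
      norm_num
    have hii : IntervalIntegrable (fun v : ℝ => v ^ (-(1/4) : ℝ)) volume 0 1 :=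
      intervalIntegrable_rpow' (by norm_num)
    unfold Greg
    rw [intervalIntegral.integral_add ((hii.const_mul 4)) (intervalIntegrable_const),
      intervalIntegral.integral_const_mul, hrpow, intervalIntegral.integral_const]
    norm_num
    ring
  linarith

lemma integrableOn_Wreg_Ioi0 : IntegrableOn Wreg (Ioi 0) := by
  rw [← Ioc_union_Ioi_eq_Ioi (zero_le_one (α := ℝ))]
  exact integrableOn_Wreg_mid.union integrableOn_Wreg_tail

lemma integrable_Wreg : Integrable Wreg := by
  have hIci : IntegrableOn Wreg (Ici 0) :=
    (integrableOn_Ici_iff_integrableOn_Ioi (by simp)).2 integrableOn_Wreg_Ioi0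
  have hIic : IntegrableOn Wreg (Iic 0) := by
    rw [← Measure.map_neg_eq_self (volume : Measure ℝ)]
    have m : MeasurableEmbedding fun x : ℝ => -x := (Homeomorph.neg ℝ).measurableEmbedding
    rw [m.integrableOn_map_iff]
    simp only [Function.comp_def]
    have : (fun x : ℝ => Wreg (-x)) = Wreg := by
      funext v; rw [← Wreg_abs (-v), abs_neg, Wreg_abs]
    rw [this, neg_preimage, neg_Iic, neg_zero]
    exact hIci
  rw [← integrableOn_univ, ← Set.Iic_union_Ici (a := (0:ℝ))]
  exact hIic.union hIci

lemma integral_Wreg_nonneg : 0 ≤ ∫ v, Wreg v :=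
  integral_nonneg Wreg_nonneg

lemma integral_Wreg_le : ∫ v, Wreg v ≤ Real.log 2 + 11 / 3 := by
  have habs : ∫ v, Wreg v = 2 * ∫ v in Ioi (0:ℝ), Wreg v := by
    have h0 : ∫ v : ℝ, Wreg |v| = 2 * ∫ v in Ioi (0:ℝ), Wreg v := integral_comp_abs
    rw [← h0]
    exact integral_congr_ae (Filter.Eventually.of_forall fun v => (Wreg_abs v).symm)
  have hsplit : ∫ v in Ioi (0:ℝ), Wreg v
      = (∫ v in Ioc (0:ℝ) 1, Wreg v) + ∫ v in Ioi (1:ℝ), Wreg v := by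
    rw [← setIntegral_union (Ioc_disjoint_Ioi le_rfl) measurableSet_Ioi
      integrableOn_Wreg_mid integrableOn_Wreg_tail,
      Ioc_union_Ioi_eq_Ioi (zero_le_one (α := ℝ))]
  have h1 := integral_Wreg_mid_le
  have h2 := integral_Wreg_tail_le
  rw [habs, hsplit]
  linarith

lemma Wreg_intervalIntegral {u : ℝ} (hu : u ≠ 0) :
    ∫ t in (0:ℝ)..1, t / (u ^ 2 + t ^ 2) = Wreg u := by
  have hpos : ∀ t : ℝ, 0 < u ^ 2 + t ^ 2 := fun t => by positivity
  have hderiv : ∀ t ∈ uIcc (0:ℝ) 1,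
      HasDerivAt (fun s => Real.log (u ^ 2 + s ^ 2) / 2) (t / (u ^ 2 + t ^ 2)) t := by
    intro t _
    have h1 : HasDerivAt (fun s : ℝ => u ^ 2 + s ^ 2) (2 * t) t := by
      simpa using (hasDerivAt_pow 2 t).const_add (u ^ 2)
    have h3 := (h1.log (hpos t).ne').div_const 2
    exact h3.congr_deriv (by ring)
  have hcont : Continuous fun t : ℝ => t / (u ^ 2 + t ^ 2) :=
    continuous_id.div (by continuity) fun t => (hpos t).ne'
  rw [intervalIntegral.integral_eq_sub_of_hasDerivAt hderiv (hcont.intervalIntegrable 0 1)]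
  rw [Wreg_eq]
  norm_num

lemma integral_Wreg_scale {y : ℝ} (hy : 0 < y) : ∫ v : ℝ, Wreg (v / y) = y * ∫ v, Wreg v := by
  rw [MeasureTheory.Measure.integral_comp_div Wreg y, abs_of_pos hy, smul_eq_mul]

end helpers

/-- Upper regularization bound for absolutely continuous measures: if `ρ` is a
bounded (by `M`) compactly supported probability density on `ℝ`, then for any
`x ∈ ℝ` and `0 < y ≤ 1`,
`∫ log|x - iy - u| ρ(u) du ≤ ∫ log|x - u| ρ(u) du + yπM/3 + yM ∫_ℝ ∫_0^1 t/(u²+t²) dt du`,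
and in particular the difference of the two log-potentials is at most `(π²/2)·y·M`. -/
theorem log_potential_upper_regularization
    (ρ : ℝ → ℝ) (hmeas : Measurable ρ) (hρ0 : ∀ u, 0 ≤ ρ u)
    (M : ℝ) (hM : ∀ u, ρ u ≤ M)
    (hprob : ∫ u, ρ u = 1) (hsupp : HasCompactSupport ρ)
    (x y : ℝ) (hy0 : 0 < y) (hy1 : y ≤ 1) :
    (∫ u : ℝ, Real.log ‖(x : ℂ) - Complex.I * (y : ℂ) - (u : ℂ)‖ * ρ u ≤
        (∫ u, Real.log |x - u| * ρ u) + y * Real.pi * M / 3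
          + y * M * ∫ u : ℝ, ∫ t in (0 : ℝ)..1, t / (u ^ 2 + t ^ 2)) ∧
    ((∫ u : ℝ, Real.log ‖(x : ℂ) - Complex.I * (y : ℂ) - (u : ℂ)‖ * ρ u)
        - (∫ u, Real.log |x - u| * ρ u) ≤ (Real.pi ^ 2 / 2) * y * M) := by
  have hM0 : 0 ≤ M := le_trans (hρ0 0) (hM 0)
  have hyne : y ≠ 0 := hy0.ne'
  set f : ℝ → ℝ := fun u => Real.log ‖(x : ℂ) - Complex.I * (y : ℂ) - (u : ℂ)‖
    with hfdef
  -- compact support facts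
  set K := tsupport ρ with hK
  have hKc : IsCompact K := hsupp
  have hKm : MeasurableSet K := hKc.isClosed.measurableSet
  have hρK : ∀ u ∉ K, ρ u = 0 := fun u hu => image_eq_zero_of_notMem_tsupport hu
  have hKfin : volume K ≠ ⊤ := hKc.measure_lt_top.ne
  -- generic integrability criterion
  have hint : ∀ (g : ℝ → ℝ), Measurable g → (∀ u ∉ K, g u = 0) →
      (∃ C, ∀ u ∈ K, |g u| ≤ C) → Integrable g := by
    rintro g hg h0 ⟨C, hC⟩
    have hgi : g = K.indicator g := by
      funext u
      by_cases h : u ∈ K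
      · simp [h]
      · simp [h, h0 u h]
    rw [hgi, integrable_indicator_iff hKm]
    exact Measure.integrableOn_of_bounded hKfin hg.aestronglyMeasurable
      ((ae_restrict_iff' hKm).2 (ae_of_all _ fun u hu => by
        simpa [Real.norm_eq_abs] using hC u hu))
  -- the absolute value and f
  have hf_eq : ∀ u : ℝ, f u = Real.log ((x - u) ^ 2 + y ^ 2) / 2 := by
    intro u
    have habs : ‖(x : ℂ) - Complex.I * (y : ℂ) - (u : ℂ)‖
        = Real.sqrt ((x - u) ^ 2 + y ^ 2) := by
      rw [Complex.norm_def, Complex.normSq_apply]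
      congr 1
      simp [Complex.sub_re, Complex.sub_im, Complex.mul_re, Complex.mul_im]
      ring
    rw [hfdef]
    simp only
    rw [habs, Real.log_sqrt (by positivity)]
  have hfcont : Continuous f := by
    have : f = fun u => Real.log ((x - u) ^ 2 + y ^ 2) / 2 := funext hf_eq
    rw [this]
    have hpos : ∀ u : ℝ, (x - u) ^ 2 + y ^ 2 ≠ 0 := fun u => by positivity
    exact (Continuous.log (by continuity) hpos).div_const 2
  -- pointwise comparison
  have hpt_eq : ∀ u : ℝ, u ≠ x → f u = Real.log |x - u| + Wreg ((u - x) / y) := by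
    intro u h
    have hxu : x - u ≠ 0 := sub_ne_zero_of_ne (Ne.symm h)
    rw [hf_eq, Wreg_comp_div hyne]
    have h2 : (u - x) ^ 2 = (x - u) ^ 2 := by ring
    rw [h2, Real.log_div (by positivity) (pow_ne_zero _ hxu), Real.log_pow, Real.log_abs]
    push_cast
    ring
  have hptwise : ∀ u : ℝ, f u ≤ Real.log |x - u| + Wreg ((u - x) / y) := by
    intro u
    rcases eq_or_ne u x with h | h
    · subst h
      have h1 : f u = Real.log y := by
        rw [hf_eq]
        simp only [sub_self]
        rw [zero_pow (by norm_num), zero_add, Real.log_pow]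
        push_cast
        ring
      have h2 : Wreg ((u - u) / y) = 0 := by
        simp [Wreg]
      rw [h1, h2, sub_self, abs_zero, Real.log_zero]
      simpa using Real.log_nonpos hy0.le hy1
    · exact le_of_eq (hpt_eq u h)
  -- integrability
  have hρint : Integrable ρ := by
    refine hint ρ hmeas hρK ⟨M, fun u _ => ?_⟩
    rw [abs_of_nonneg (hρ0 u)]
    exact hM u
  have hfρ : Integrable (fun u => f u * ρ u) := by
    obtain ⟨C, hC⟩ := hKc.exists_bound_of_continuousOn hfcont.continuousOn
    refine hint _ (hfcont.measurable.mul hmeas) (fun u hu => by rw [hρK u hu, mul_zero])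
      ⟨C * M, fun u hu => ?_⟩
    have hC' : |f u| ≤ C := by simpa [Real.norm_eq_abs] using hC u hu
    rw [abs_mul, abs_of_nonneg (hρ0 u)]
    exact mul_le_mul hC' (hM u) (hρ0 u) (le_trans (abs_nonneg _) hC')
  have hWcomp : Integrable (fun u : ℝ => Wreg ((u - x) / y)) :=
    (integrable_Wreg.comp_div hyne).comp_sub_right x
  have hDρ : Integrable (fun u => Wreg ((u - x) / y) * ρ u) := by
    refine (hWcomp.const_mul M).mono'
      ((hWcomp.aestronglyMeasurable).mul hmeas.aestronglyMeasurable) (ae_of_all _ fun u => ?_)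
    have h0 := Wreg_nonneg ((u - x) / y)
    rw [Real.norm_eq_abs, abs_of_nonneg (mul_nonneg h0 (hρ0 u))]
    calc Wreg ((u - x) / y) * ρ u ≤ Wreg ((u - x) / y) * M :=
          mul_le_mul_of_nonneg_left (hM u) h0
      _ = M * Wreg ((u - x) / y) := mul_comm _ _
  have hgρ : Integrable (fun u => Real.log |x - u| * ρ u) := by
    have heq : (fun u => f u * ρ u - Wreg ((u - x) / y) * ρ u)
        =ᵐ[volume] fun u => Real.log |x - u| * ρ u := by
      filter_upwards [compl_mem_ae_iff.2 (measure_singleton x)] with u hu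
      rw [hpt_eq u hu]
      ring
    exact (hfρ.sub hDρ).congr heq
  -- main comparison
  have key : ∫ u, f u * ρ u
      ≤ (∫ u, Real.log |x - u| * ρ u) + ∫ u, Wreg ((u - x) / y) * ρ u := by
    have hle : ∀ u, f u * ρ u ≤ Real.log |x - u| * ρ u + Wreg ((u - x) / y) * ρ u := by
      intro u
      calc f u * ρ u ≤ (Real.log |x - u| + Wreg ((u - x) / y)) * ρ u :=
            mul_le_mul_of_nonneg_right (hptwise u) (hρ0 u)
        _ = Real.log |x - u| * ρ u + Wreg ((u - x) / y) * ρ u := add_mul _ _ _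
    calc ∫ u, f u * ρ u
        ≤ ∫ u, (Real.log |x - u| * ρ u + Wreg ((u - x) / y) * ρ u) :=
          integral_mono hfρ (hgρ.add hDρ) hle
      _ = _ := integral_add hgρ hDρ
  have hDbound : ∫ u, Wreg ((u - x) / y) * ρ u ≤ M * (y * ∫ v, Wreg v) := by
    have h1 : ∫ u, Wreg ((u - x) / y) * ρ u ≤ ∫ u : ℝ, M * Wreg ((u - x) / y) := by
      refine integral_mono hDρ (hWcomp.const_mul M) fun u => ?_
      have h0 := Wreg_nonneg ((u - x) / y)
      calc Wreg ((u - x) / y) * ρ u ≤ Wreg ((u - x) / y) * M :=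
            mul_le_mul_of_nonneg_left (hM u) h0
        _ = M * Wreg ((u - x) / y) := mul_comm _ _
    have h2 : ∫ u : ℝ, M * Wreg ((u - x) / y) = M * ∫ u : ℝ, Wreg ((u - x) / y) :=
      MeasureTheory.integral_const_mul M _
    have h3 : ∫ u : ℝ, Wreg ((u - x) / y) = ∫ v : ℝ, Wreg (v / y) :=
      integral_sub_right_eq_self (fun v => Wreg (v / y)) x
    rw [h2, h3, integral_Wreg_scale hy0] at h1
    exact h1
  have hJ : (∫ u : ℝ, ∫ t in (0 : ℝ)..1, t / (u ^ 2 + t ^ 2)) = ∫ v, Wreg v := by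
    refine integral_congr_ae ?_
    filter_upwards [compl_mem_ae_iff.2 (measure_singleton (0 : ℝ))] with u hu
    exact Wreg_intervalIntegral hu
  have hWnn : 0 ≤ ∫ v, Wreg v := integral_Wreg_nonneg
  have eM : M * (y * ∫ v, Wreg v) = y * M * ∫ v, Wreg v := by ring
  constructor
  · have hπ : 0 ≤ y * Real.pi * M / 3 := by positivity
    rw [hJ]
    linarith [key, hDbound]
  · have h45 : Real.log 2 + 11 / 3 ≤ Real.pi ^ 2 / 2 := by
      nlinarith [Real.pi_gt_three, Real.log_two_lt_d9]
    have hWle := integral_Wreg_le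
    have hyM : 0 ≤ y * M := mul_nonneg hy0.le hM0
    have h5 : M * (y * ∫ v, Wreg v) ≤ M * (y * (Real.log 2 + 11 / 3)) :=
      mul_le_mul_of_nonneg_left (mul_le_mul_of_nonneg_left hWle hy0.le) hM0
    have h6 := mul_le_mul_of_nonneg_left h45 hyM
    have e1 : y * M * (Real.log 2 + 11 / 3) = M * (y * (Real.log 2 + 11 / 3)) := by ring
    have e2 : y * M * (Real.pi ^ 2 / 2) = Real.pi ^ 2 / 2 * y * M := by ring
    linarith [key, hDbound]
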